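/- arXiv:1701.06096 — 4 statements merged into one kernel-verified Lean document; each statement's English description precedes it below -/
import Mathlib

section
/- Weak duality between (LinearP) and (LinearD): for every primal feasible solution (x,y) of (LinearP) and every dual feasible solution (λ, μ, ν, π) of (LinearD), the dual objective value satisfies −Σ_{k∈K} m_k CVaR_α(c_k⊤Z) − λ⊤b + Σ_{s∈S} p_s π_s⊤h_s ≤ f⊤x + Σ_{s∈S} p_s q_s⊤y_s. -/
open Matrix
open scoped BigOperators Classical

/-- Conditional value-at-risk at confidence level `α` of a random variable with
realizations `v s` and probabilities `p s` on a finite space. -/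
noncomputable def CVaR {ι : Type*} [Fintype ι] (α : ℝ) (p v : ι → ℝ) : ℝ :=
  sInf {r : ℝ | ∃ η : ℝ, r = η + (1 - α)⁻¹ * ∑ s, p s * max (v s - η) 0}

/-- Value-at-risk at confidence level `α`: the minimal `η` with `P(V ≤ η) ≥ α`
(stated as an infimum; the minimum exists for finitely many realizations). -/
noncomputable def VaR {ι : Type*} [Fintype ι] (α : ℝ) (p v : ι → ℝ) : ℝ :=
  sInf {η : ℝ | α ≤ ∑ s, if v s ≤ η then p s else 0}

/-- The scenario-`s` realization `ĝ_s(x,y_s) = ḡ_s x + g̃_s y_s` of the random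
outcome vector `Ĝ(x,y)`. -/
noncomputable def Ghat {m n1 n2 d : ℕ} (gbar : Fin m → Matrix (Fin d) (Fin n1) ℝ)
    (gtil : Fin m → Matrix (Fin d) (Fin n2) ℝ)
    (x : Fin n1 → ℝ) (y : Fin m → Fin n2 → ℝ) (s : Fin m) : Fin d → ℝ :=
  (gbar s).mulVec x + (gtil s).mulVec (y s)

/-- `x ∈ X` and `y_s ∈ Y(x,s)` for every scenario `s`. -/
def InXY {m m1 m2 n1 n2 : ℕ} (A : Matrix (Fin m1) (Fin n1) ℝ) (b : Fin m1 → ℝ)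
    (Tm : Fin m → Matrix (Fin m2) (Fin n1) ℝ)
    (Wm : Fin m → Matrix (Fin m2) (Fin n2) ℝ)
    (hvec : Fin m → Fin m2 → ℝ) (x : Fin n1 → ℝ) (y : Fin m → Fin n2 → ℝ) : Prop :=
  (∀ i, 0 ≤ x i) ∧ (∀ i, A.mulVec x i ≤ b i) ∧
    ∀ s, (∀ j, 0 ≤ y s j) ∧ ∀ i, hvec s i ≤ ((Tm s).mulVec x + (Wm s).mulVec (y s)) i

/-- Feasibility for problem (LinearP). -/
def PrimalFeas {m m1 m2 n1 n2 d τ : ℕ} (α : ℝ) (p : Fin m → ℝ)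
    (A : Matrix (Fin m1) (Fin n1) ℝ) (b : Fin m1 → ℝ)
    (Tm : Fin m → Matrix (Fin m2) (Fin n1) ℝ)
    (Wm : Fin m → Matrix (Fin m2) (Fin n2) ℝ)
    (hvec : Fin m → Fin m2 → ℝ)
    (gbar : Fin m → Matrix (Fin d) (Fin n1) ℝ)
    (gtil : Fin m → Matrix (Fin d) (Fin n2) ℝ)
    (z : Fin τ → Fin d → ℝ) (pt : Fin τ → ℝ) (C : Set (Fin d → ℝ))
    (x : Fin n1 → ℝ) (y : Fin m → Fin n2 → ℝ) : Prop :=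
  InXY A b Tm Wm hvec x y ∧
    ∀ c ∈ C, CVaR α p (fun s => c ⬝ᵥ Ghat gbar gtil x y s)
      ≤ CVaR α pt (fun i => c ⬝ᵥ z i)

/-- Objective function of problem (LinearP). -/
noncomputable def PrimalObj {m n1 n2 : ℕ} (p : Fin m → ℝ) (fv : Fin n1 → ℝ)
    (q : Fin m → Fin n2 → ℝ) (x : Fin n1 → ℝ) (y : Fin m → Fin n2 → ℝ) : ℝ :=
  fv ⬝ᵥ x + ∑ s, p s * (q s ⬝ᵥ y s)

/-- Feasibility for the dual problem (LinearD), with the finitely supported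
measures `μ` and `ν_s` represented by common support points `c k` and weights
`mw k` and `nw s k` (`k ∈ Fin K`). -/
def DualFeas {m m1 m2 n1 n2 d K : ℕ} (α : ℝ) (p : Fin m → ℝ)
    (A : Matrix (Fin m1) (Fin n1) ℝ) (fv : Fin n1 → ℝ)
    (Tm : Fin m → Matrix (Fin m2) (Fin n1) ℝ)
    (Wm : Fin m → Matrix (Fin m2) (Fin n2) ℝ)
    (q : Fin m → Fin n2 → ℝ)
    (gbar : Fin m → Matrix (Fin d) (Fin n1) ℝ)
    (gtil : Fin m → Matrix (Fin d) (Fin n2) ℝ)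
    (C : Set (Fin d → ℝ))
    (c : Fin K → Fin d → ℝ) (mw : Fin K → ℝ) (nw : Fin m → Fin K → ℝ)
    (lam : Fin m1 → ℝ) (piv : Fin m → Fin m2 → ℝ) : Prop :=
  (∀ k, c k ∈ C) ∧ (∀ k, 0 ≤ mw k) ∧ (∀ s k, 0 ≤ nw s k) ∧
    (∀ i, 0 ≤ lam i) ∧ (∀ s i, 0 ≤ piv s i) ∧
    (∀ k, ∑ s, p s * nw s k = mw k) ∧
    (∀ s k, nw s k ≤ mw k / (1 - α)) ∧
    (∀ j, ∑ s, p s * (Matrix.vecMul (piv s) (Tm s) j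
        - ∑ k, nw s k * Matrix.vecMul (c k) (gbar s) j)
      ≤ fv j + Matrix.vecMul lam A j) ∧
    ∀ s j, Matrix.vecMul (piv s) (Wm s) j
        - ∑ k, nw s k * Matrix.vecMul (c k) (gtil s) j ≤ q s j

/-- Objective function of the dual problem (LinearD). -/
noncomputable def DualObj {m m1 m2 d τ K : ℕ} (α : ℝ) (p : Fin m → ℝ)
    (b : Fin m1 → ℝ) (hvec : Fin m → Fin m2 → ℝ)
    (z : Fin τ → Fin d → ℝ) (pt : Fin τ → ℝ)
    (c : Fin K → Fin d → ℝ) (mw : Fin K → ℝ)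
    (lam : Fin m1 → ℝ) (piv : Fin m → Fin m2 → ℝ) : ℝ :=
  -(∑ k, mw k * CVaR α pt (fun i => c k ⬝ᵥ z i)) - lam ⬝ᵥ b
    + ∑ s, p s * (piv s ⬝ᵥ hvec s)

lemma sum_swap_mul {ι κ : Type*} [Fintype ι] [Fintype κ] (a : κ → ℝ)
    (v : κ → ι → ℝ) (w : ι → ℝ) :
    ∑ j, (∑ k, a k * v k j) * w j = ∑ k, a k * (v k ⬝ᵥ w) := by
  simp only [dotProduct, Finset.sum_mul, Finset.mul_sum]
  rw [Finset.sum_comm]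
  exact Finset.sum_congr rfl fun k _ => Finset.sum_congr rfl fun j _ => by ring

lemma dot_mono {ι : Type*} [Fintype ι] {u v w : ι → ℝ} (hu : ∀ i, 0 ≤ u i)
    (h : ∀ i, v i ≤ w i) : u ⬝ᵥ v ≤ u ⬝ᵥ w :=
  Finset.sum_le_sum fun i _ => mul_le_mul_of_nonneg_left (h i) (hu i)

lemma dot_mono_right {ι : Type*} [Fintype ι] {u v w : ι → ℝ} (hw : ∀ i, 0 ≤ w i)
    (h : ∀ i, u i ≤ v i) : u ⬝ᵥ w ≤ v ⬝ᵥ w :=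
  Finset.sum_le_sum fun i _ => mul_le_mul_of_nonneg_right (h i) (hw i)

/-- Key CVaR bound: weighted averages with density bounded by `M/(1-α)` are
bounded by `M` times the CVaR. -/
lemma sum_weighted_le_cvar {ι : Type*} [Fintype ι] (α : ℝ) (hα1 : α < 1)
    (p v n : ι → ℝ) (M : ℝ) (hp : ∀ s, 0 ≤ p s) (hn : ∀ s, 0 ≤ n s)
    (hsum : ∑ s, p s * n s = M) (hbd : ∀ s, n s ≤ M / (1 - α)) :
    ∑ s, p s * n s * v s ≤ M * CVaR α p v := by
  have h1α : (0:ℝ) < 1 - α := by linarith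
  have hM : 0 ≤ M := by
    rw [← hsum]
    exact Finset.sum_nonneg fun s _ => mul_nonneg (hp s) (hn s)
  set S : Set ℝ := {r : ℝ | ∃ η : ℝ, r = η + (1 - α)⁻¹ * ∑ s, p s * max (v s - η) 0}
  have hstep : ∀ r ∈ S, ∑ s, p s * n s * v s ≤ M * r := by
    rintro r ⟨η, rfl⟩
    have e1 : ∑ s, p s * n s * v s
        = (∑ s, p s * n s * (v s - η)) + M * η := by
      rw [← hsum, Finset.sum_mul, ← Finset.sum_add_distrib]
      exact Finset.sum_congr rfl fun s _ => by ring
    have e2 : ∑ s, p s * n s * (v s - η)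
        ≤ ∑ s, p s * (M / (1 - α)) * max (v s - η) 0 := by
      refine Finset.sum_le_sum fun s _ => ?_
      have h1 : p s * n s * (v s - η) ≤ p s * n s * max (v s - η) 0 :=
        mul_le_mul_of_nonneg_left (le_max_left _ _)
          (mul_nonneg (hp s) (hn s))
      have h2 : p s * n s * max (v s - η) 0
          ≤ p s * (M / (1 - α)) * max (v s - η) 0 := by
        apply mul_le_mul_of_nonneg_right _ (le_max_right _ _)
        exact mul_le_mul_of_nonneg_left (hbd s) (hp s)
      linarith
    have e3 : ∑ s, p s * (M / (1 - α)) * max (v s - η) 0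
        = M * ((1 - α)⁻¹ * ∑ s, p s * max (v s - η) 0) := by
      simp only [Finset.mul_sum]
      refine Finset.sum_congr rfl fun s _ => ?_
      rw [div_eq_mul_inv]; ring
    calc ∑ s, p s * n s * v s
        = (∑ s, p s * n s * (v s - η)) + M * η := e1
      _ ≤ M * ((1 - α)⁻¹ * ∑ s, p s * max (v s - η) 0) + M * η := by
          rw [← e3]; linarith
      _ = M * (η + (1 - α)⁻¹ * ∑ s, p s * max (v s - η) 0) := by ring
  rcases eq_or_lt_of_le hM with hM0 | hMpos
  · have hn0 : ∀ s, n s = 0 := fun s =>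
      le_antisymm (by have := hbd s; rw [← hM0] at this; simpa using this) (hn s)
    have : ∑ s, p s * n s * v s = 0 := by
      simp [hn0]
    rw [this, ← hM0]; simp
  · have hne : S.Nonempty :=
      ⟨0 + (1 - α)⁻¹ * ∑ s, p s * max (v s - 0) 0, ⟨0, rfl⟩⟩
    have hlb : (∑ s, p s * n s * v s) / M ≤ sInf S := by
      refine le_csInf hne fun r hr => ?_
      exact (div_le_iff₀ hMpos).mpr (by rw [mul_comm]; exact hstep r hr)
    have := (div_le_iff₀ hMpos).mp hlb
    rw [mul_comm] at this
    exact this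

/-- weak duality between (LinearP) and (LinearD). -/
theorem linear_weak_duality
    (m m1 m2 n1 n2 d τ : ℕ)
    (p : Fin m → ℝ) (hp : ∀ s, 0 < p s) (hp1 : ∑ s, p s = 1)
    (α : ℝ) (hα0 : 0 ≤ α) (hα1 : α < 1)
    (A : Matrix (Fin m1) (Fin n1) ℝ) (b : Fin m1 → ℝ) (fv : Fin n1 → ℝ)
    (Tm : Fin m → Matrix (Fin m2) (Fin n1) ℝ)
    (Wm : Fin m → Matrix (Fin m2) (Fin n2) ℝ)
    (q : Fin m → Fin n2 → ℝ) (hvec : Fin m → Fin m2 → ℝ)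
    (gbar : Fin m → Matrix (Fin d) (Fin n1) ℝ)
    (gtil : Fin m → Matrix (Fin d) (Fin n2) ℝ)
    (z : Fin τ → Fin d → ℝ)
    (pt : Fin τ → ℝ) (hpt : ∀ i, 0 < pt i) (hpt1 : ∑ i, pt i = 1)
    (C : Set (Fin d → ℝ)) (hCsub : C ⊆ {c | (∀ i, 0 ≤ c i) ∧ ∑ i, c i = 1})
    (hCpoly : ∃ F : Finset (Fin d → ℝ), C = convexHull ℝ (F : Set (Fin d → ℝ)))
    (x : Fin n1 → ℝ) (y : Fin m → Fin n2 → ℝ)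
    (K : ℕ) (c : Fin K → Fin d → ℝ) (mw : Fin K → ℝ) (nw : Fin m → Fin K → ℝ)
    (lam : Fin m1 → ℝ) (piv : Fin m → Fin m2 → ℝ)
    (hPfeas : PrimalFeas α p A b Tm Wm hvec gbar gtil z pt C x y)
    (hDfeas : DualFeas α p A fv Tm Wm q gbar gtil C c mw nw lam piv) :
    DualObj α p b hvec z pt c mw lam piv ≤ PrimalObj p fv q x y := by
  obtain ⟨⟨hx0, hAx, hY⟩, hCVaR⟩ := hPfeas
  obtain ⟨hcC, hmw0, hnw0, hlam0, hpiv0, hsumk, hbdd, hcon1, hcon2⟩ := hDfeas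
  have hpnn : ∀ s, 0 ≤ p s := fun s => (hp s).le
  -- abbreviations
  set Gx : Fin m → Fin K → ℝ := fun s k => Matrix.vecMul (c k) (gbar s) ⬝ᵥ x with hGx
  set Gy : Fin m → Fin K → ℝ := fun s k => Matrix.vecMul (c k) (gtil s) ⬝ᵥ y s with hGy
  have hGdecomp : ∀ s k, c k ⬝ᵥ Ghat gbar gtil x y s = Gx s k + Gy s k := by
    intro s k
    simp [Ghat, dotProduct_add, dotProduct_mulVec, hGx, hGy]
  -- Step 1: π_s ⬝ h_s ≤ (π_s T_s)⬝x + (π_s W_s)⬝y_s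
  have S1 : ∀ s, piv s ⬝ᵥ hvec s
      ≤ Matrix.vecMul (piv s) (Tm s) ⬝ᵥ x + Matrix.vecMul (piv s) (Wm s) ⬝ᵥ y s := by
    intro s
    have h := dot_mono (hpiv0 s) ((hY s).2)
    rwa [dotProduct_add, dotProduct_mulVec, dotProduct_mulVec] at h
  -- Step 2: (π_s W_s)⬝y_s ≤ q_s⬝y_s + Σ_k n_{s,k} (c_k g̃_s)⬝y_s
  have S2 : ∀ s, Matrix.vecMul (piv s) (Wm s) ⬝ᵥ y s
      ≤ q s ⬝ᵥ y s + ∑ k, nw s k * Gy s k := by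
    intro s
    have h := dot_mono_right (w := y s) (u := Matrix.vecMul (piv s) (Wm s))
      (v := fun j => q s j + ∑ k, nw s k * Matrix.vecMul (c k) (gtil s) j)
      ((hY s).1) (fun j => by
        show Matrix.vecMul (piv s) (Wm s) j
          ≤ q s j + ∑ k, nw s k * Matrix.vecMul (c k) (gtil s) j
        linarith [hcon2 s j])
    refine le_trans h (le_of_eq ?_)
    show ∑ j, (q s j + ∑ k, nw s k * Matrix.vecMul (c k) (gtil s) j) * y s j = _
    simp only [add_mul, Finset.sum_add_distrib]
    rw [sum_swap_mul (fun k => nw s k) (fun k j => Matrix.vecMul (c k) (gtil s) j) (y s)]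
    rfl
  -- Step 3: Σ_s p_s (π_s T_s)⬝x ≤ f⬝x + λ⬝b + Σ_s p_s Σ_k n_{s,k} (c_k ḡ_s)⬝x
  have S3 : ∑ s, p s * (Matrix.vecMul (piv s) (Tm s) ⬝ᵥ x)
      ≤ fv ⬝ᵥ x + lam ⬝ᵥ b + ∑ s, p s * ∑ k, nw s k * Gx s k := by
    have h := dot_mono_right (w := x)
      (u := fun j => ∑ s, p s * (Matrix.vecMul (piv s) (Tm s) j
        - ∑ k, nw s k * Matrix.vecMul (c k) (gbar s) j))
      (v := fun j => fv j + Matrix.vecMul lam A j) hx0 hcon1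
    have hlhs : (fun j => ∑ s, p s * (Matrix.vecMul (piv s) (Tm s) j
          - ∑ k, nw s k * Matrix.vecMul (c k) (gbar s) j)) ⬝ᵥ x
        = ∑ s, p s * (Matrix.vecMul (piv s) (Tm s) ⬝ᵥ x)
          - ∑ s, p s * ∑ k, nw s k * Gx s k := by
      show ∑ j, (∑ s, p s * (Matrix.vecMul (piv s) (Tm s) j
          - ∑ k, nw s k * Matrix.vecMul (c k) (gbar s) j)) * x j = _
      simp only [Finset.sum_mul]
      rw [Finset.sum_comm, ← Finset.sum_sub_distrib]
      refine Finset.sum_congr rfl fun s _ => ?_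
      have hswap := sum_swap_mul (fun k => nw s k)
        (fun k j => Matrix.vecMul (c k) (gbar s) j) x
      have e1 : ∑ j, p s * (Matrix.vecMul (piv s) (Tm s) j
            - ∑ k, nw s k * Matrix.vecMul (c k) (gbar s) j) * x j
          = p s * (∑ j, Matrix.vecMul (piv s) (Tm s) j * x j)
            - p s * ∑ j, (∑ k, nw s k * Matrix.vecMul (c k) (gbar s) j) * x j := by
        rw [Finset.mul_sum, Finset.mul_sum, ← Finset.sum_sub_distrib]
        exact Finset.sum_congr rfl fun j _ => by ring
      rw [e1, hswap]
      simp only [hGx, dotProduct]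
      try ring
    have hrhs : (fun j => fv j + Matrix.vecMul lam A j) ⬝ᵥ x
        ≤ fv ⬝ᵥ x + lam ⬝ᵥ b := by
      have e : (fun j => fv j + Matrix.vecMul lam A j) ⬝ᵥ x
          = fv ⬝ᵥ x + lam ⬝ᵥ A.mulVec x := by
        rw [dotProduct_mulVec]
        show ∑ j, (fv j + Matrix.vecMul lam A j) * x j
          = (∑ j, fv j * x j) + ∑ j, Matrix.vecMul lam A j * x j
        rw [← Finset.sum_add_distrib]
        exact Finset.sum_congr rfl fun j _ => by ring
      rw [e]
      exact add_le_add (le_refl _) (dot_mono hlam0 hAx)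
    rw [hlhs] at h
    linarith [h.trans hrhs]
  -- Step 4: CVaR bound per k
  have key : ∀ k, ∑ s, p s * nw s k * (Gx s k + Gy s k)
      ≤ mw k * CVaR α pt (fun i => c k ⬝ᵥ z i) := by
    intro k
    have h1 : ∑ s, p s * nw s k * (Gx s k + Gy s k)
        ≤ mw k * CVaR α p (fun s => c k ⬝ᵥ Ghat gbar gtil x y s) := by
      have := sum_weighted_le_cvar α hα1 p
        (fun s => c k ⬝ᵥ Ghat gbar gtil x y s) (fun s => nw s k) (mw k)
        hpnn (fun s => hnw0 s k) (hsumk k) (fun s => hbdd s k)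
      refine le_trans (le_of_eq ?_) this
      exact Finset.sum_congr rfl fun s _ => by simp only [hGdecomp s k]
    exact h1.trans (mul_le_mul_of_nonneg_left (hCVaR (c k) (hcC k)) (hmw0 k))
  -- Combine everything
  have comb : ∑ s, p s * ∑ k, nw s k * (Gx s k + Gy s k)
      ≤ ∑ k, mw k * CVaR α pt (fun i => c k ⬝ᵥ z i) := by
    have e : ∑ s, p s * ∑ k, nw s k * (Gx s k + Gy s k)
        = ∑ k, ∑ s, p s * nw s k * (Gx s k + Gy s k) := by
      rw [Finset.sum_comm]
      refine Finset.sum_congr rfl fun s _ => ?_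
      rw [Finset.mul_sum]
      exact Finset.sum_congr rfl fun k _ => by ring
    rw [e]
    exact Finset.sum_le_sum fun k _ => key k
  have T1 : ∑ s, p s * (piv s ⬝ᵥ hvec s)
      ≤ ∑ s, p s * (Matrix.vecMul (piv s) (Tm s) ⬝ᵥ x)
        + ∑ s, p s * (q s ⬝ᵥ y s + ∑ k, nw s k * Gy s k) := by
    rw [← Finset.sum_add_distrib]
    refine Finset.sum_le_sum fun s _ => ?_
    rw [← mul_add]
    exact mul_le_mul_of_nonneg_left (le_trans (S1 s)
      (add_le_add (le_refl _) (S2 s))) (hpnn s)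
  have expand : ∑ s, p s * (q s ⬝ᵥ y s + ∑ k, nw s k * Gy s k)
      + ∑ s, p s * ∑ k, nw s k * Gx s k
      = ∑ s, p s * (q s ⬝ᵥ y s) + ∑ s, p s * ∑ k, nw s k * (Gx s k + Gy s k) := by
    rw [← Finset.sum_add_distrib, ← Finset.sum_add_distrib]
    refine Finset.sum_congr rfl fun s _ => ?_
    have e1 : ∑ k, nw s k * (Gx s k + Gy s k)
        = (∑ k, nw s k * Gx s k) + ∑ k, nw s k * Gy s k := by
      rw [← Finset.sum_add_distrib]
      exact Finset.sum_congr rfl fun k _ => by ring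
    rw [e1]
    ring
  simp only [DualObj, PrimalObj]
  have final := T1.trans (by linarith [S3] :
    ∑ s, p s * (Matrix.vecMul (piv s) (Tm s) ⬝ᵥ x)
      + ∑ s, p s * (q s ⬝ᵥ y s + ∑ k, nw s k * Gy s k)
    ≤ fv ⬝ᵥ x + lam ⬝ᵥ b + ∑ s, p s * ∑ k, nw s k * Gx s k
      + ∑ s, p s * (q s ⬝ᵥ y s + ∑ k, nw s k * Gy s k))
  linarith [comb, final, expand]
end

section
/- Complementary slackness implies Lagrangian minimality: let (x*,y*) be a primal feasible solution of (LinearP) and let (λ̄, μ̄, ν̄, π̄) be a dual feasible solution of (LinearD) (with common finite support points c_k, weights m̄_k for μ̄ and n̄_{s,k} for ν̄_s) such that the complementary slackness conditions hold: (i) m̄_k > 0 ⇒ CVaR_α(c_k⊤Ĝ(x*,y*)) = CVaR_α(c_k⊤Z); (ii) n̄_{s,k} > 0 ⇒ VaR_α(c_k⊤Ĝ(x*,y*)) ≤ c_k⊤ĝ_s(x*,y*_s); (iii) n̄_{s,k} < m̄_k/(1−α) ⇒ VaR_α(c_k⊤Ĝ(x*,y*)) ≥ c_k⊤ĝ_s(x*,y*_s);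 (iv) λ̄⊤(b − Ax*) = 0; (v) π̄_s⊤(T_s x* + W_s y*_s − h_s) = 0 for all s ∈ S; (vi) (f⊤ + λ̄⊤A − Σ_s p_s π̄_s⊤T_s + Σ_s p_s Σ_k n̄_{s,k} c_k⊤ḡ_s) x* = 0; (vii) (q_s⊤ − π̄_s⊤W_s + Σ_k n̄_{s,k} c_k⊤g̃_s) y*_s = 0 for all s ∈ S. Then L(x,y,μ̄) ≥ L(x*,y*,μ̄) for every (x,y) with x ∈ X and y_s ∈ Y(x,s) for all s ∈ S. -/
open Matrix
open scoped BigOperators Classical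

/-- The Lagrangian `L(x,y,μ)` for a finitely supported nonnegative measure `μ`
on `C` with support points `c k` and weights `mw k`. -/
noncomputable def Lagr {m n1 n2 d τ K : ℕ} (α : ℝ) (p : Fin m → ℝ)
    (fv : Fin n1 → ℝ) (q : Fin m → Fin n2 → ℝ)
    (gbar : Fin m → Matrix (Fin d) (Fin n1) ℝ)
    (gtil : Fin m → Matrix (Fin d) (Fin n2) ℝ)
    (z : Fin τ → Fin d → ℝ) (pt : Fin τ → ℝ)
    (c : Fin K → Fin d → ℝ) (mw : Fin K → ℝ)
    (x : Fin n1 → ℝ) (y : Fin m → Fin n2 → ℝ) : ℝ :=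
  PrimalObj p fv q x y
    + ∑ k, mw k * CVaR α p (fun s => c k ⬝ᵥ Ghat gbar gtil x y s)
    - ∑ k, mw k * CVaR α pt (fun i => c k ⬝ᵥ z i)

private lemma aux_dot_sum_smul {n : ℕ} {κ : Type*} [Fintype κ] (w : κ → ℝ)
    (f : κ → Fin n → ℝ) (x : Fin n → ℝ) :
    (fun j => ∑ k, w k * f k j) ⬝ᵥ x = ∑ k, w k * (f k ⬝ᵥ x) := by
  simp only [dotProduct, Finset.mul_sum, Finset.sum_mul]
  rw [Finset.sum_comm]
  apply Finset.sum_congr rfl; intros; apply Finset.sum_congr rfl; intros; ring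

private lemma aux_cvar_lb {ι : Type*} [Fintype ι] {α : ℝ} {p v : ι → ℝ}
    (hp : ∀ s, 0 ≤ p s) (hp1 : ∑ s, p s = 1) (hα0 : 0 ≤ α) (hα1 : α < 1) :
    ∀ r ∈ {r : ℝ | ∃ η : ℝ, r = η + (1 - α)⁻¹ * ∑ s, p s * max (v s - η) 0},
      (∑ s, p s * v s) ≤ r := by
  rintro r ⟨η, rfl⟩
  have h1α : (0:ℝ) < 1 - α := by linarith
  have hβpos : (0:ℝ) < (1 - α)⁻¹ := inv_pos.mpr h1α
  have hβ : (1:ℝ) ≤ (1 - α)⁻¹ := by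
    nlinarith [mul_inv_cancel₀ (ne_of_gt h1α), mul_nonneg hα0 hβpos.le]
  have hsum1 : ∑ s, p s * (v s - η) = (∑ s, p s * v s) - η := by
    simp [mul_sub, Finset.sum_sub_distrib, ← Finset.sum_mul, hp1]
  have h1 : ∑ s, p s * (v s - η) ≤ ∑ s, p s * max (v s - η) 0 :=
    Finset.sum_le_sum fun s _ => mul_le_mul_of_nonneg_left (le_max_left _ _) (hp s)
  have h2 : 0 ≤ ∑ s, p s * max (v s - η) 0 :=
    Finset.sum_nonneg fun s _ => mul_nonneg (hp s) (le_max_right _ _)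
  nlinarith [mul_le_mul_of_nonneg_right hβ h2]

private lemma aux_cvar_le {ι : Type*} [Fintype ι] {α : ℝ} {p v : ι → ℝ}
    (hp : ∀ s, 0 ≤ p s) (hp1 : ∑ s, p s = 1) (hα0 : 0 ≤ α) (hα1 : α < 1) (η : ℝ) :
    CVaR α p v ≤ η + (1 - α)⁻¹ * ∑ s, p s * max (v s - η) 0 :=
  csInf_le ⟨_, fun r hr => aux_cvar_lb hp hp1 hα0 hα1 r hr⟩ ⟨η, rfl⟩

private lemma aux_le_cvar {ι : Type*} [Fintype ι] {α : ℝ} {p v : ι → ℝ} {B : ℝ}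
    (hB : ∀ η : ℝ, B ≤ η + (1 - α)⁻¹ * ∑ s, p s * max (v s - η) 0) :
    B ≤ CVaR α p v :=
  le_csInf ⟨_, ⟨0, rfl⟩⟩ (by rintro r ⟨η, rfl⟩; exact hB η)

private lemma aux_weighted_le_cvar {ι : Type*} [Fintype ι] {α : ℝ} {p v : ι → ℝ}
    (hp : ∀ s, 0 ≤ p s) (hp1 : ∑ s, p s = 1) (hα0 : 0 ≤ α) (hα1 : α < 1)
    {n : ι → ℝ} {M : ℝ} (hn0 : ∀ s, 0 ≤ n s) (hnM : ∀ s, n s ≤ M / (1 - α))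
    (hsum : ∑ s, p s * n s = M) :
    ∑ s, p s * n s * v s ≤ M * CVaR α p v := by
  have h1α : (0:ℝ) < 1 - α := by linarith
  have hM : 0 ≤ M := hsum ▸ Finset.sum_nonneg fun s _ => mul_nonneg (hp s) (hn0 s)
  rcases eq_or_lt_of_le hM with hM0 | hM0
  · have hn : ∀ s, n s = 0 := by
      intro s
      have h := hnM s
      rw [← hM0] at h
      simp only [zero_div] at h
      exact le_antisymm h (hn0 s)
    simp [hn, ← hM0]
  · have key : ∀ η : ℝ, ∑ s, p s * n s * v s
        ≤ M * (η + (1 - α)⁻¹ * ∑ s, p s * max (v s - η) 0) := by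
      intro η
      have e1 : ∑ s, p s * n s * v s = M * η + ∑ s, p s * n s * (v s - η) := by
        rw [← hsum, Finset.sum_mul, ← Finset.sum_add_distrib]
        apply Finset.sum_congr rfl; intros; ring
      have e2 : ∑ s, p s * n s * (v s - η)
          ≤ ∑ s, p s * (M / (1 - α)) * max (v s - η) 0 := by
        apply Finset.sum_le_sum; intro s _
        calc p s * n s * (v s - η) = p s * (n s * (v s - η)) := by ring
          _ ≤ p s * (n s * max (v s - η) 0) :=
              mul_le_mul_of_nonneg_left
                (mul_le_mul_of_nonneg_left (le_max_left _ _) (hn0 s)) (hp s)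
          _ ≤ p s * ((M / (1 - α)) * max (v s - η) 0) :=
              mul_le_mul_of_nonneg_left
                (mul_le_mul_of_nonneg_right (hnM s) (le_max_right _ _)) (hp s)
          _ = p s * (M / (1 - α)) * max (v s - η) 0 := by ring
      have e3 : ∑ s, p s * (M / (1 - α)) * max (v s - η) 0
          = M * ((1 - α)⁻¹ * ∑ s, p s * max (v s - η) 0) := by
        rw [Finset.mul_sum, Finset.mul_sum]
        apply Finset.sum_congr rfl; intros
        field_simp
      calc ∑ s, p s * n s * v s = M * η + ∑ s, p s * n s * (v s - η) := e1
        _ ≤ M * η + ∑ s, p s * (M / (1 - α)) * max (v s - η) 0 := by linarith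
        _ = M * (η + (1 - α)⁻¹ * ∑ s, p s * max (v s - η) 0) := by rw [e3]; ring
    have hdiv : (∑ s, p s * n s * v s) / M ≤ CVaR α p v := by
      apply aux_le_cvar
      intro η
      rw [div_le_iff₀ hM0]
      calc (∑ s, p s * n s * v s) ≤ M * (η + (1 - α)⁻¹ * ∑ s, p s * max (v s - η) 0) := key η
        _ = (η + (1 - α)⁻¹ * ∑ s, p s * max (v s - η) 0) * M := mul_comm _ _
    calc ∑ s, p s * n s * v s = ((∑ s, p s * n s * v s) / M) * M := by field_simp
      _ ≤ CVaR α p v * M := mul_le_mul_of_nonneg_right hdiv hM0.le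
      _ = M * CVaR α p v := mul_comm _ _

private lemma aux_dot_sum_smul2 {n : ℕ} {κ₁ κ₂ : Type*} [Fintype κ₁] [Fintype κ₂]
    (w : κ₁ → ℝ) (u : κ₁ → κ₂ → ℝ) (f : κ₁ → κ₂ → Fin n → ℝ) (x : Fin n → ℝ) :
    (fun j => ∑ s, w s * ∑ k, u s k * f s k j) ⬝ᵥ x
      = ∑ s, w s * ∑ k, u s k * (f s k ⬝ᵥ x) := by
  calc (fun j => ∑ s, w s * ∑ k, u s k * f s k j) ⬝ᵥ x
      = ∑ s, w s * ((fun j => ∑ k, u s k * f s k j) ⬝ᵥ x) :=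
        aux_dot_sum_smul w (fun s j => ∑ k, u s k * f s k j) x
    _ = ∑ s, w s * ∑ k, u s k * (f s k ⬝ᵥ x) := by
        apply Finset.sum_congr rfl; intro s _
        rw [aux_dot_sum_smul (fun k => u s k) (fun k => f s k) x]

/-- complementary slackness implies Lagrangian minimality of the
primal solution for the measure `μ̄` from the dual solution. -/
theorem complementary_slackness_implies_lagrangian_min
    (m m1 m2 n1 n2 d τ : ℕ)
    (p : Fin m → ℝ) (hp : ∀ s, 0 < p s) (hp1 : ∑ s, p s = 1)
    (α : ℝ) (hα0 : 0 ≤ α) (hα1 : α < 1)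
    (A : Matrix (Fin m1) (Fin n1) ℝ) (b : Fin m1 → ℝ) (fv : Fin n1 → ℝ)
    (Tm : Fin m → Matrix (Fin m2) (Fin n1) ℝ)
    (Wm : Fin m → Matrix (Fin m2) (Fin n2) ℝ)
    (q : Fin m → Fin n2 → ℝ) (hvec : Fin m → Fin m2 → ℝ)
    (gbar : Fin m → Matrix (Fin d) (Fin n1) ℝ)
    (gtil : Fin m → Matrix (Fin d) (Fin n2) ℝ)
    (z : Fin τ → Fin d → ℝ)
    (pt : Fin τ → ℝ) (hpt : ∀ i, 0 < pt i) (hpt1 : ∑ i, pt i = 1)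
    (C : Set (Fin d → ℝ)) (hCsub : C ⊆ {c | (∀ i, 0 ≤ c i) ∧ ∑ i, c i = 1})
    (hCpoly : ∃ F : Finset (Fin d → ℝ), C = convexHull ℝ (F : Set (Fin d → ℝ)))
    (xstar : Fin n1 → ℝ) (ystar : Fin m → Fin n2 → ℝ)
    (hPstar : PrimalFeas α p A b Tm Wm hvec gbar gtil z pt C xstar ystar)
    (K : ℕ) (c : Fin K → Fin d → ℝ) (mw : Fin K → ℝ) (nw : Fin m → Fin K → ℝ)
    (lam : Fin m1 → ℝ) (piv : Fin m → Fin m2 → ℝ)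
    (hDfeas : DualFeas α p A fv Tm Wm q gbar gtil C c mw nw lam piv)
    -- complementary slackness conditions (i)-(vii)
    (hcs1 : ∀ k, 0 < mw k →
      CVaR α p (fun s => c k ⬝ᵥ Ghat gbar gtil xstar ystar s)
        = CVaR α pt (fun i => c k ⬝ᵥ z i))
    (hcs2 : ∀ s k, 0 < nw s k →
      VaR α p (fun s' => c k ⬝ᵥ Ghat gbar gtil xstar ystar s')
        ≤ c k ⬝ᵥ Ghat gbar gtil xstar ystar s)
    (hcs3 : ∀ s k, nw s k < mw k / (1 - α) →
      c k ⬝ᵥ Ghat gbar gtil xstar ystar s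
        ≤ VaR α p (fun s' => c k ⬝ᵥ Ghat gbar gtil xstar ystar s'))
    (hcs4 : lam ⬝ᵥ (b - A.mulVec xstar) = 0)
    (hcs5 : ∀ s, piv s ⬝ᵥ ((Tm s).mulVec xstar + (Wm s).mulVec (ystar s) - hvec s) = 0)
    (hcs6 : (fun j => fv j + Matrix.vecMul lam A j
        - ∑ s, p s * Matrix.vecMul (piv s) (Tm s) j
        + ∑ s, p s * ∑ k, nw s k * Matrix.vecMul (c k) (gbar s) j) ⬝ᵥ xstar = 0)
    (hcs7 : ∀ s, (fun j => q s j - Matrix.vecMul (piv s) (Wm s) j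
        + ∑ k, nw s k * Matrix.vecMul (c k) (gtil s) j) ⬝ᵥ ystar s = 0) :
    ∀ x y, InXY A b Tm Wm hvec x y →
      Lagr α p fv q gbar gtil z pt c mw xstar ystar
        ≤ Lagr α p fv q gbar gtil z pt c mw x y := by
  intro x y hXY
  obtain ⟨hx0, hAx, hY⟩ := hXY
  obtain ⟨hcC, hmw0, hnw0, hlam0, hpiv0, hnsum, hnle, hdualx, hdualy⟩ := hDfeas
  have h1α : (0:ℝ) < 1 - α := by linarith
  have hp0 : ∀ s, 0 ≤ p s := fun s => (hp s).le
  -- Step 1: general lower bound on weighted values by CVaR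
  have hk1 : ∀ k, ∑ s, p s * nw s k * (c k ⬝ᵥ Ghat gbar gtil x y s)
      ≤ mw k * CVaR α p (fun s => c k ⬝ᵥ Ghat gbar gtil x y s) := fun k =>
    aux_weighted_le_cvar hp0 hp1 hα0 hα1 (fun s => hnw0 s k) (fun s => hnle s k) (hnsum k)
  -- Step 2: at the primal optimum the weighted values dominate mw k * CVaR
  have hk2 : ∀ k, mw k * CVaR α p (fun s => c k ⬝ᵥ Ghat gbar gtil xstar ystar s)
      ≤ ∑ s, p s * nw s k * (c k ⬝ᵥ Ghat gbar gtil xstar ystar s) := by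
    intro k
    have hterm : ∀ s, nw s k * (c k ⬝ᵥ Ghat gbar gtil xstar ystar s
          - VaR α p (fun s' => c k ⬝ᵥ Ghat gbar gtil xstar ystar s'))
        = (mw k / (1 - α)) * max (c k ⬝ᵥ Ghat gbar gtil xstar ystar s
          - VaR α p (fun s' => c k ⬝ᵥ Ghat gbar gtil xstar ystar s')) 0 := by
      intro s
      rcases lt_trichotomy (c k ⬝ᵥ Ghat gbar gtil xstar ystar s)
        (VaR α p (fun s' => c k ⬝ᵥ Ghat gbar gtil xstar ystar s')) with h | h | h
      · have hn : nw s k = 0 := by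
          by_contra hne
          have hpos : 0 < nw s k := lt_of_le_of_ne (hnw0 s k) (Ne.symm hne)
          exact absurd (hcs2 s k hpos) (not_le.mpr h)
        rw [hn, max_eq_right (by linarith)]; ring
      · rw [h]; simp
      · have hn : nw s k = mw k / (1 - α) := by
          refine le_antisymm (hnle s k) ?_
          by_contra hne
          have hlt : nw s k < mw k / (1 - α) := not_le.mp hne
          exact absurd (hcs3 s k hlt) (not_le.mpr h)
        rw [hn, max_eq_left (by linarith)]
    have hsumeq : ∑ s, p s * nw s k * (c k ⬝ᵥ Ghat gbar gtil xstar ystar s)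
        = mw k * ((VaR α p (fun s' => c k ⬝ᵥ Ghat gbar gtil xstar ystar s'))
          + (1 - α)⁻¹ * ∑ s, p s * max (c k ⬝ᵥ Ghat gbar gtil xstar ystar s
              - VaR α p (fun s' => c k ⬝ᵥ Ghat gbar gtil xstar ystar s')) 0) := by
      have e1 : ∑ s, p s * nw s k * (c k ⬝ᵥ Ghat gbar gtil xstar ystar s)
          = (∑ s, p s * nw s k) * (VaR α p (fun s' => c k ⬝ᵥ Ghat gbar gtil xstar ystar s'))
            + ∑ s, p s * ((mw k / (1 - α)) * max (c k ⬝ᵥ Ghat gbar gtil xstar ystar s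
                - VaR α p (fun s' => c k ⬝ᵥ Ghat gbar gtil xstar ystar s')) 0) := by
        rw [Finset.sum_mul, ← Finset.sum_add_distrib]
        apply Finset.sum_congr rfl; intro s _
        rw [← hterm s]; ring
      have e2 : ∑ s, p s * ((mw k / (1 - α)) * max (c k ⬝ᵥ Ghat gbar gtil xstar ystar s
              - VaR α p (fun s' => c k ⬝ᵥ Ghat gbar gtil xstar ystar s')) 0)
          = (mw k / (1 - α)) * ∑ s, p s * max (c k ⬝ᵥ Ghat gbar gtil xstar ystar s
              - VaR α p (fun s' => c k ⬝ᵥ Ghat gbar gtil xstar ystar s')) 0 := by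
        rw [Finset.mul_sum]
        apply Finset.sum_congr rfl; intros; ring
      rw [e1, e2, hnsum k, div_eq_mul_inv]; ring
    calc mw k * CVaR α p (fun s => c k ⬝ᵥ Ghat gbar gtil xstar ystar s)
        ≤ mw k * ((VaR α p (fun s' => c k ⬝ᵥ Ghat gbar gtil xstar ystar s'))
          + (1 - α)⁻¹ * ∑ s, p s * max (c k ⬝ᵥ Ghat gbar gtil xstar ystar s
              - VaR α p (fun s' => c k ⬝ᵥ Ghat gbar gtil xstar ystar s')) 0) :=
          mul_le_mul_of_nonneg_left (aux_cvar_le hp0 hp1 hα0 hα1 _) (hmw0 k)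
      _ = ∑ s, p s * nw s k * (c k ⬝ᵥ Ghat gbar gtil xstar ystar s) := hsumeq.symm
  -- componentwise nonnegativity of reduced costs
  have hDx0 : ∀ j, 0 ≤ fv j + Matrix.vecMul lam A j
      - ∑ s, p s * Matrix.vecMul (piv s) (Tm s) j
      + ∑ s, p s * ∑ k, nw s k * Matrix.vecMul (c k) (gbar s) j := by
    intro j
    have h := hdualx j
    have hsplit : ∑ s, p s * (Matrix.vecMul (piv s) (Tm s) j
          - ∑ k, nw s k * Matrix.vecMul (c k) (gbar s) j)
        = ∑ s, p s * Matrix.vecMul (piv s) (Tm s) j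
          - ∑ s, p s * ∑ k, nw s k * Matrix.vecMul (c k) (gbar s) j := by
      rw [← Finset.sum_sub_distrib]
      apply Finset.sum_congr rfl; intros; ring
    rw [hsplit] at h
    linarith
  have hEy0 : ∀ s j, 0 ≤ q s j - Matrix.vecMul (piv s) (Wm s) j
      + ∑ k, nw s k * Matrix.vecMul (c k) (gtil s) j := by
    intro s j
    have h := hdualy s j
    linarith
  -- the master algebraic identity
  have master : ∀ (xx : Fin n1 → ℝ) (yy : Fin m → Fin n2 → ℝ),
      fv ⬝ᵥ xx + (∑ s, p s * (q s ⬝ᵥ yy s))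
        + ∑ k, ∑ s, p s * nw s k * (c k ⬝ᵥ Ghat gbar gtil xx yy s)
      = ((fun j => fv j + Matrix.vecMul lam A j
          - ∑ s, p s * Matrix.vecMul (piv s) (Tm s) j
          + ∑ s, p s * ∑ k, nw s k * Matrix.vecMul (c k) (gbar s) j) ⬝ᵥ xx)
        + (∑ s, p s * ((fun j => q s j - Matrix.vecMul (piv s) (Wm s) j
            + ∑ k, nw s k * Matrix.vecMul (c k) (gtil s) j) ⬝ᵥ yy s))
        + lam ⬝ᵥ (b - A.mulVec xx)
        + (∑ s, p s * (piv s ⬝ᵥ ((Tm s).mulVec xx + (Wm s).mulVec (yy s) - hvec s)))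
        - lam ⬝ᵥ b + ∑ s, p s * (piv s ⬝ᵥ hvec s) := by
    intro xx yy
    have hG : ∀ (k : Fin K) (s : Fin m), c k ⬝ᵥ Ghat gbar gtil xx yy s
        = Matrix.vecMul (c k) (gbar s) ⬝ᵥ xx + Matrix.vecMul (c k) (gtil s) ⬝ᵥ yy s := by
      intro k s
      simp [Ghat, dotProduct_add, Matrix.dotProduct_mulVec]
    have hDdot : (fun j => fv j + Matrix.vecMul lam A j
          - ∑ s, p s * Matrix.vecMul (piv s) (Tm s) j
          + ∑ s, p s * ∑ k, nw s k * Matrix.vecMul (c k) (gbar s) j) ⬝ᵥ xx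
        = fv ⬝ᵥ xx + Matrix.vecMul lam A ⬝ᵥ xx
          - (∑ s, p s * (Matrix.vecMul (piv s) (Tm s) ⬝ᵥ xx))
          + ∑ s, p s * ∑ k, nw s k * (Matrix.vecMul (c k) (gbar s) ⬝ᵥ xx) := by
      rw [← aux_dot_sum_smul p (fun s => Matrix.vecMul (piv s) (Tm s)) xx,
          ← aux_dot_sum_smul2 p nw (fun s k => Matrix.vecMul (c k) (gbar s)) xx]
      simp only [dotProduct, add_mul, sub_mul]
      simp only [Finset.sum_add_distrib, Finset.sum_sub_distrib]
    have hEdot : ∀ s, (fun j => q s j - Matrix.vecMul (piv s) (Wm s) j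
          + ∑ k, nw s k * Matrix.vecMul (c k) (gtil s) j) ⬝ᵥ yy s
        = q s ⬝ᵥ yy s - Matrix.vecMul (piv s) (Wm s) ⬝ᵥ yy s
          + ∑ k, nw s k * (Matrix.vecMul (c k) (gtil s) ⬝ᵥ yy s) := by
      intro s
      rw [← aux_dot_sum_smul (fun k => nw s k) (fun k => Matrix.vecMul (c k) (gtil s)) (yy s)]
      simp only [dotProduct, add_mul, sub_mul]
      simp only [Finset.sum_add_distrib, Finset.sum_sub_distrib]
    have hlamdot : lam ⬝ᵥ (b - A.mulVec xx) = lam ⬝ᵥ b - Matrix.vecMul lam A ⬝ᵥ xx := by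
      rw [dotProduct_sub, Matrix.dotProduct_mulVec]
    have hpivdot : ∀ s, piv s ⬝ᵥ ((Tm s).mulVec xx + (Wm s).mulVec (yy s) - hvec s)
        = Matrix.vecMul (piv s) (Tm s) ⬝ᵥ xx + Matrix.vecMul (piv s) (Wm s) ⬝ᵥ yy s
          - piv s ⬝ᵥ hvec s := by
      intro s
      rw [dotProduct_sub, dotProduct_add, Matrix.dotProduct_mulVec,
        Matrix.dotProduct_mulVec]
    have hswap : ∑ k, ∑ s, p s * nw s k * (Matrix.vecMul (c k) (gbar s) ⬝ᵥ xx
          + Matrix.vecMul (c k) (gtil s) ⬝ᵥ yy s)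
        = (∑ s, p s * ∑ k, nw s k * (Matrix.vecMul (c k) (gbar s) ⬝ᵥ xx))
          + ∑ s, p s * ∑ k, nw s k * (Matrix.vecMul (c k) (gtil s) ⬝ᵥ yy s) := by
      rw [Finset.sum_comm, ← Finset.sum_add_distrib]
      apply Finset.sum_congr rfl; intro s _
      rw [Finset.mul_sum, Finset.mul_sum, ← Finset.sum_add_distrib]
      apply Finset.sum_congr rfl; intros; ring
    have hEsum : ∑ s, p s * ((fun j => q s j - Matrix.vecMul (piv s) (Wm s) j
          + ∑ k, nw s k * Matrix.vecMul (c k) (gtil s) j) ⬝ᵥ yy s)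
        = (∑ s, p s * (q s ⬝ᵥ yy s)) - (∑ s, p s * (Matrix.vecMul (piv s) (Wm s) ⬝ᵥ yy s))
          + ∑ s, p s * ∑ k, nw s k * (Matrix.vecMul (c k) (gtil s) ⬝ᵥ yy s) := by
      rw [← Finset.sum_sub_distrib, ← Finset.sum_add_distrib]
      apply Finset.sum_congr rfl; intro s _
      rw [hEdot s]; ring
    have hpsum : ∑ s, p s * (piv s ⬝ᵥ ((Tm s).mulVec xx + (Wm s).mulVec (yy s) - hvec s))
        = (∑ s, p s * (Matrix.vecMul (piv s) (Tm s) ⬝ᵥ xx))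
          + (∑ s, p s * (Matrix.vecMul (piv s) (Wm s) ⬝ᵥ yy s))
          - ∑ s, p s * (piv s ⬝ᵥ hvec s) := by
      rw [← Finset.sum_add_distrib, ← Finset.sum_sub_distrib]
      apply Finset.sum_congr rfl; intro s _
      rw [hpivdot s]; ring
    simp only [hG]
    rw [hDdot, hlamdot, hswap, hEsum, hpsum]
    ring
  -- general lower bound
  have hGen : -(lam ⬝ᵥ b) + ∑ s, p s * (piv s ⬝ᵥ hvec s)
      ≤ PrimalObj p fv q x y
        + ∑ k, mw k * CVaR α p (fun s => c k ⬝ᵥ Ghat gbar gtil x y s) := by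
    have hm := master x y
    have h1 : 0 ≤ (fun j => fv j + Matrix.vecMul lam A j
        - ∑ s, p s * Matrix.vecMul (piv s) (Tm s) j
        + ∑ s, p s * ∑ k, nw s k * Matrix.vecMul (c k) (gbar s) j) ⬝ᵥ x :=
      Finset.sum_nonneg fun j _ => mul_nonneg (hDx0 j) (hx0 j)
    have h2 : 0 ≤ ∑ s, p s * ((fun j => q s j - Matrix.vecMul (piv s) (Wm s) j
        + ∑ k, nw s k * Matrix.vecMul (c k) (gtil s) j) ⬝ᵥ y s) :=
      Finset.sum_nonneg fun s _ => mul_nonneg (hp0 s)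
        (Finset.sum_nonneg fun j _ => mul_nonneg (hEy0 s j) ((hY s).1 j))
    have h3 : 0 ≤ lam ⬝ᵥ (b - A.mulVec x) :=
      Finset.sum_nonneg fun i _ => mul_nonneg (hlam0 i)
        (by simp only [Pi.sub_apply]; linarith [hAx i])
    have h4 : 0 ≤ ∑ s, p s * (piv s ⬝ᵥ ((Tm s).mulVec x + (Wm s).mulVec (y s) - hvec s)) :=
      Finset.sum_nonneg fun s _ => mul_nonneg (hp0 s)
        (Finset.sum_nonneg fun i _ => mul_nonneg (hpiv0 s i)
          (by have hh := (hY s).2 i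
              simp only [Pi.sub_apply, Pi.add_apply] at hh ⊢
              linarith))
    have h5 : ∑ k, ∑ s, p s * nw s k * (c k ⬝ᵥ Ghat gbar gtil x y s)
        ≤ ∑ k, mw k * CVaR α p (fun s => c k ⬝ᵥ Ghat gbar gtil x y s) :=
      Finset.sum_le_sum fun k _ => hk1 k
    have hobj : PrimalObj p fv q x y = fv ⬝ᵥ x + ∑ s, p s * (q s ⬝ᵥ y s) := rfl
    linarith [hm]
  -- equality (up to the CVaR inequality) at the primal optimum
  have hStar : PrimalObj p fv q xstar ystar
      + ∑ k, mw k * CVaR α p (fun s => c k ⬝ᵥ Ghat gbar gtil xstar ystar s)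
      ≤ -(lam ⬝ᵥ b) + ∑ s, p s * (piv s ⬝ᵥ hvec s) := by
    have hm := master xstar ystar
    have h2 : ∑ s, p s * ((fun j => q s j - Matrix.vecMul (piv s) (Wm s) j
        + ∑ k, nw s k * Matrix.vecMul (c k) (gtil s) j) ⬝ᵥ ystar s) = 0 :=
      Finset.sum_eq_zero fun s _ => by rw [hcs7 s, mul_zero]
    have h4 : ∑ s, p s * (piv s ⬝ᵥ ((Tm s).mulVec xstar
        + (Wm s).mulVec (ystar s) - hvec s)) = 0 :=
      Finset.sum_eq_zero fun s _ => by rw [hcs5 s, mul_zero]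
    have h5 : ∑ k, mw k * CVaR α p (fun s => c k ⬝ᵥ Ghat gbar gtil xstar ystar s)
        ≤ ∑ k, ∑ s, p s * nw s k * (c k ⬝ᵥ Ghat gbar gtil xstar ystar s) :=
      Finset.sum_le_sum fun k _ => hk2 k
    have hobj : PrimalObj p fv q xstar ystar
        = fv ⬝ᵥ xstar + ∑ s, p s * (q s ⬝ᵥ ystar s) := rfl
    linarith [hm, hcs6, hcs4]
  show Lagr α p fv q gbar gtil z pt c mw xstar ystar ≤ Lagr α p fv q gbar gtil z pt c mw x y
  unfold Lagr
  linarith [hGen, hStar]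
end

section
/- Validity of the Benders feasibility cuts in the scenario-decomposition algorithm: fix a scenario s ∈ S and scalarization vectors c_1,…,c_L ∈ ℝ^d. Let γ ∈ ℝ^{m2} and β ∈ ℝ^L satisfy γ ≥ 0, β ≥ 0, and W_s⊤γ − Σ_{l=1}^L β_l g̃_s⊤c_l ≤ 0 componentwise. Then for every x ∈ ℝ^{n1}, η ∈ ℝ^L, w ∈ ℝ^L for which there exists y ∈ ℝ^{n2} with y ≥ 0, W_s y ≥ h_s − T_s x, and −c_l⊤g̃_s y ≥ c_l⊤ḡ_s x − η_l − w_l for all l = 1,…,L, one has 0 ≥ γ⊤(h_s − T_s x) + Σ_{l=1}^L β_l (c_l⊤ḡ_s x − η_l − w_l). -/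
open Matrix
open scoped BigOperators

/-- validity of the Benders feasibility cuts in the
scenario-decomposition algorithm. -/
theorem benders_feasibility_cut_valid
    (m1 m2 n1 n2 d L : ℕ)
    (Ws : Matrix (Fin m2) (Fin n2) ℝ) (Ts : Matrix (Fin m2) (Fin n1) ℝ)
    (gbar : Matrix (Fin d) (Fin n1) ℝ) (gtil : Matrix (Fin d) (Fin n2) ℝ)
    (q : Fin n2 → ℝ) (hs : Fin m2 → ℝ)
    (c : Fin L → Fin d → ℝ)
    (γ : Fin m2 → ℝ) (β : Fin L → ℝ)
    (hγ : ∀ i, 0 ≤ γ i) (hβ : ∀ l, 0 ≤ β l)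
    (hdual : ∀ j, Matrix.vecMul γ Ws j - ∑ l, β l * Matrix.vecMul (c l) gtil j ≤ 0) :
    ∀ (x : Fin n1 → ℝ) (ηv w : Fin L → ℝ),
      (∃ y : Fin n2 → ℝ, (∀ j, 0 ≤ y j) ∧
        (∀ i, hs i - Ts.mulVec x i ≤ Ws.mulVec y i) ∧
        ∀ l, c l ⬝ᵥ gbar.mulVec x - ηv l - w l ≤ -(c l ⬝ᵥ gtil.mulVec y)) →
      γ ⬝ᵥ (hs - Ts.mulVec x) + ∑ l, β l * (c l ⬝ᵥ gbar.mulVec x - ηv l - w l) ≤ 0 := by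
  rintro x ηv w ⟨y, hy, hW, hc⟩
  have h1 : γ ⬝ᵥ (hs - Ts.mulVec x) ≤ γ ⬝ᵥ Ws.mulVec y := by
    apply Finset.sum_le_sum
    intro i _
    exact mul_le_mul_of_nonneg_left (by simpa using hW i) (hγ i)
  have h2 : ∑ l, β l * (c l ⬝ᵥ gbar.mulVec x - ηv l - w l)
      ≤ ∑ l, β l * (-(c l ⬝ᵥ gtil.mulVec y)) := by
    apply Finset.sum_le_sum
    intro l _
    exact mul_le_mul_of_nonneg_left (hc l) (hβ l)
  have key : γ ⬝ᵥ Ws.mulVec y + ∑ l, β l * (-(c l ⬝ᵥ gtil.mulVec y)) ≤ 0 := by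
    have h3 : γ ⬝ᵥ Ws.mulVec y + ∑ l, β l * (-(c l ⬝ᵥ gtil.mulVec y))
        = ∑ j, (Matrix.vecMul γ Ws j - ∑ l, β l * Matrix.vecMul (c l) gtil j) * y j := by
      simp only [Matrix.dotProduct_mulVec]
      simp only [dotProduct, sub_mul, Finset.sum_sub_distrib, Finset.sum_mul,
        Finset.mul_sum, mul_neg, mul_assoc, ← Finset.sum_neg_distrib]
      congr 1
      rw [Finset.sum_comm]
      simp [Finset.sum_neg_distrib]
    rw [h3]
    apply Finset.sum_nonpos
    intro j _
    exact mul_nonpos_of_nonpos_of_nonneg (hdual j) (hy j)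
  linarith
end

section
/- Finite reduction of the increasing convex order (expected-shortfall) constraint on a finite probability space: let X have realizations x_s with probabilities p_s (s ∈ S) and let Z have realizations ζ_t with probabilities p̃_t (t ∈ T). Then Σ_{s∈S} p_s max(x_s − η, 0) ≤ Σ_{t∈T} p̃_t max(ζ_t − η, 0) holds for all η ∈ ℝ if and only if Σ_{s∈S} p_s max(x_s − ζ_t, 0) ≤ Σ_{i∈T} p̃_i max(ζ_i − ζ_t, 0) holds for all t ∈ T. -/
open scoped BigOperators

private lemma pospart_mono {x a b : ℝ} (h : a ≤ b) :
    max (x - b) 0 ≤ max (x - a) 0 := by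
  apply max_le
  · calc x - b ≤ x - a := by linarith
    _ ≤ max (x - a) 0 := le_max_left _ _
  · exact le_max_right _ _

private lemma pospart_lip {x a b : ℝ} (h : a ≤ b) :
    max (x - a) 0 ≤ max (x - b) 0 + (b - a) := by
  apply max_le
  · have := le_max_left (x - b) 0; linarith
  · have := le_max_right (x - b) 0; linarith

private lemma pospart_convex {u v l mu : ℝ} (hl : 0 ≤ l) (hmu : 0 ≤ mu) :
    max (l * u + mu * v) 0 ≤ l * max u 0 + mu * max v 0 := by
  have h1 := le_max_left u 0
  have h2 := le_max_right u 0
  have h3 := le_max_left v 0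
  have h4 := le_max_right v 0
  apply max_le
  · nlinarith
  · nlinarith

/-- finite reduction of the increasing convex order
(expected-shortfall) constraint on a finite probability space. -/
theorem ico_finite_reduction
    (m τ : ℕ)
    (p : Fin m → ℝ) (hp : ∀ s, 0 < p s) (hp1 : ∑ s, p s = 1)
    (pt : Fin τ → ℝ) (hpt : ∀ t, 0 < pt t) (hpt1 : ∑ t, pt t = 1)
    (x : Fin m → ℝ) (ζ : Fin τ → ℝ) :
    (∀ η : ℝ, ∑ s, p s * max (x s - η) 0 ≤ ∑ t, pt t * max (ζ t - η) 0) ↔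
      ∀ t, ∑ s, p s * max (x s - ζ t) 0 ≤ ∑ i, pt i * max (ζ i - ζ t) 0 := by
  constructor
  · intro h t; exact h (ζ t)
  · intro h η
    -- τ is positive
    have hτ : τ ≠ 0 := by
      rintro rfl
      simp at hpt1
    have : NeZero τ := ⟨hτ⟩
    -- F is antitone
    have Fmono : ∀ a b : ℝ, a ≤ b →
        ∑ s, p s * max (x s - b) 0 ≤ ∑ s, p s * max (x s - a) 0 := by
      intro a b hab
      exact Finset.sum_le_sum fun s _ =>
        mul_le_mul_of_nonneg_left (pospart_mono hab) (hp s).le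
    -- F is 1-Lipschitz (downwards)
    have Flip : ∀ a b : ℝ, a ≤ b →
        ∑ s, p s * max (x s - a) 0 ≤ (∑ s, p s * max (x s - b) 0) + (b - a) := by
      intro a b hab
      have : ∑ s, p s * max (x s - a) 0 ≤
          ∑ s, (p s * max (x s - b) 0 + p s * (b - a)) := by
        refine Finset.sum_le_sum fun s _ => ?_
        have := mul_le_mul_of_nonneg_left (pospart_lip (x := x s) hab) (hp s).le
        nlinarith
      rw [Finset.sum_add_distrib, ← Finset.sum_mul, hp1] at this
      linarith
    -- get min and max of ζ
    obtain ⟨t0, -, ht0⟩ := Finset.exists_min_image Finset.univ ζ ⟨⟨0, Nat.pos_of_ne_zero hτ⟩, Finset.mem_univ _⟩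
    obtain ⟨t1, -, ht1⟩ := Finset.exists_max_image Finset.univ ζ ⟨⟨0, Nat.pos_of_ne_zero hτ⟩, Finset.mem_univ _⟩
    simp only [Finset.mem_univ, forall_true_left] at ht0 ht1
    by_cases h1 : η < ζ t0
    · -- below the minimum
      have step1 : ∑ s, p s * max (x s - η) 0 ≤
          (∑ s, p s * max (x s - ζ t0) 0) + (ζ t0 - η) := Flip η (ζ t0) h1.le
      have step2 : (∑ s, p s * max (x s - ζ t0) 0) + (ζ t0 - η) ≤
          (∑ i, pt i * max (ζ i - ζ t0) 0) + (ζ t0 - η) := by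
        linarith [h t0]
      have step3 : (∑ i, pt i * max (ζ i - ζ t0) 0) + (ζ t0 - η) =
          ∑ i, pt i * max (ζ i - η) 0 := by
        have : ∀ i : Fin τ, pt i * max (ζ i - η) 0 =
            pt i * max (ζ i - ζ t0) 0 + pt i * (ζ t0 - η) := by
          intro i
          have hi : ζ t0 ≤ ζ i := ht0 i
          rw [max_eq_left (by linarith), max_eq_left (by linarith)]
          ring
        rw [Finset.sum_congr rfl fun i _ => this i, Finset.sum_add_distrib,
          ← Finset.sum_mul, hpt1]
        ring
      linarith
    · push_neg at h1
      by_cases h2 : ζ t1 ≤ η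
      · -- above the maximum
        have step1 : ∑ s, p s * max (x s - η) 0 ≤
            ∑ s, p s * max (x s - ζ t1) 0 := Fmono (ζ t1) η h2
        have step2 : ∑ i, pt i * max (ζ i - ζ t1) 0 = 0 := by
          apply Finset.sum_eq_zero
          intro i _
          rw [max_eq_right (by linarith [ht1 i])]
          ring
        have step3 : (0:ℝ) ≤ ∑ i, pt i * max (ζ i - η) 0 := by
          apply Finset.sum_nonneg
          intro i _
          exact mul_nonneg (hpt i).le (le_max_right _ _)
        linarith [h t1]
      · push_neg at h2
        -- ζ t0 ≤ η < ζ t1 : find surrounding kink points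
        obtain ⟨ta, hta_mem, hta⟩ := Finset.exists_max_image
          (Finset.univ.filter fun i => ζ i ≤ η) ζ
          ⟨t0, by simp [h1]⟩
        obtain ⟨tb, htb_mem, htb⟩ := Finset.exists_min_image
          (Finset.univ.filter fun i => η < ζ i) ζ
          ⟨t1, by simp [h2]⟩
        simp only [Finset.mem_filter, Finset.mem_univ, true_and] at hta_mem htb_mem hta htb
        set a := ζ ta with ha_def
        set b := ζ tb with hb_def
        have hab : a ≤ η := hta_mem
        have hbb : η < b := htb_mem
        have hba : a < b := lt_of_le_of_lt hab hbb
        set l := (b - η) / (b - a) with hl_def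
        set mu := (η - a) / (b - a) with hmu_def
        have hden : (0:ℝ) < b - a := by linarith
        have hl0 : 0 ≤ l := div_nonneg (by linarith) hden.le
        have hmu0 : 0 ≤ mu := div_nonneg (by linarith) hden.le
        have hsum1 : l + mu = 1 := by
          rw [hl_def, hmu_def, ← add_div]
          rw [show b - η + (η - a) = b - a by ring]
          exact div_self hden.ne'
        have hcomb : l * a + mu * b = η := by
          rw [hl_def, hmu_def]
          field_simp
          ring
        -- F η ≤ l * F a + mu * F b
        have stepF : ∑ s, p s * max (x s - η) 0 ≤
            l * (∑ s, p s * max (x s - a) 0) + mu * (∑ s, p s * max (x s - b) 0) := by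
          rw [Finset.mul_sum, Finset.mul_sum, ← Finset.sum_add_distrib]
          refine Finset.sum_le_sum fun s _ => ?_
          have key : max (x s - η) 0 ≤ l * max (x s - a) 0 + mu * max (x s - b) 0 := by
            have : x s - η = l * (x s - a) + mu * (x s - b) := by
              have : l * (x s - a) + mu * (x s - b) =
                  (l + mu) * x s - (l * a + mu * b) := by ring
              rw [this, hsum1, hcomb]; ring
            rw [this]
            exact pospart_convex hl0 hmu0
          calc p s * max (x s - η) 0 ≤
              p s * (l * max (x s - a) 0 + mu * max (x s - b) 0) :=
                mul_le_mul_of_nonneg_left key (hp s).le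
            _ = l * (p s * max (x s - a) 0) + mu * (p s * max (x s - b) 0) := by ring
        -- l * G a + mu * G b = G η
        have stepG : l * (∑ i, pt i * max (ζ i - a) 0) + mu * (∑ i, pt i * max (ζ i - b) 0) =
            ∑ i, pt i * max (ζ i - η) 0 := by
          rw [Finset.mul_sum, Finset.mul_sum, ← Finset.sum_add_distrib]
          refine Finset.sum_congr rfl fun i _ => ?_
          by_cases hi : ζ i ≤ η
          · have hia : ζ i ≤ a := hta i hi
            rw [max_eq_right (by linarith), max_eq_right (by linarith),
              max_eq_right (by linarith)]
            ring
          · push_neg at hi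
            have hib : b ≤ ζ i := htb i hi
            rw [max_eq_left (by linarith), max_eq_left (by linarith),
              max_eq_left (by linarith)]
            have : l * (pt i * (ζ i - a)) + mu * (pt i * (ζ i - b)) =
                pt i * ((l + mu) * ζ i - (l * a + mu * b)) := by ring
            rw [this, hsum1, hcomb]
            ring
        have hGa := h ta
        have hGb := h tb
        calc ∑ s, p s * max (x s - η) 0
            ≤ l * (∑ s, p s * max (x s - a) 0) + mu * (∑ s, p s * max (x s - b) 0) := stepF
          _ ≤ l * (∑ i, pt i * max (ζ i - a) 0) + mu * (∑ i, pt i * max (ζ i - b) 0) := by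
              have h1' := mul_le_mul_of_nonneg_left hGa hl0
              have h2' := mul_le_mul_of_nonneg_left hGb hmu0
              linarith
          _ = ∑ i, pt i * max (ζ i - η) 0 := stepG
end
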